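/- For all integers q ≥ 3 and i with 1 ≤ i ≤ q−2, and all reals α > 0 and d > 0 such that 6^q/(α·d) ≤ 1, one has (1 − 6^q/(α·d))^(α·d/(2·5^(q−2−i))) ≤ 1/(8q+1), where the left-hand side is a real power (rpow). Equivalently, setting p = 6^q/(α·d), the quantity p_i := 1 − (1−p)^(α·d/(2·5^(q−2−i))) satisfies p_i ≥ 1 − 1/(8q+1). -/

import Mathlib

open Real

namespace LTCPaper

lemma aux_pow (m : ℕ) : ((16 * m + 100) * 5 ^ m : ℕ) ≤ 216 * 6 ^ m := by
  induction m with
  | zero => norm_num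
  | succ n ih =>
    have h5 : (0:ℕ) < 5 ^ n := Nat.pow_pos (by norm_num)
    calc (16 * (n+1) + 100) * 5 ^ (n+1) = ((16 * n + 100) * 5 ^ n) * 5 + 80 * 5 ^ n := by ring
    _ ≤ (216 * 6 ^ n) * 5 + 216 * 6 ^ n := by
        have h56 : 5 ^ n ≤ 6 ^ n := Nat.pow_le_pow_left (by norm_num) n
        have : 80 * 5 ^ n ≤ 216 * 6 ^ n := le_trans (Nat.mul_le_mul_left _ h56) (Nat.mul_le_mul_right _ (by norm_num))
        exact Nat.add_le_add (Nat.mul_le_mul_right _ ih) this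
    _ = 216 * 6 ^ (n+1) := by ring

/-- **Claim (heavy edges are selected with high probability).** For `3 ≤ q`, `1 ≤ i ≤ q − 2` and
`p = 6^q/(α·d) ≤ 1`, we have `(1 − p)^(α·d/(2·5^(q−2−i))) ≤ 1/(8q+1)`; equivalently the success
probability `p_i = 1 − (1−p)^(α·d/(2·5^(q−2−i)))` is at least `1 − 1/(8q+1)`. -/
theorem heavy_edge_selection_prob (q i : ℕ) (hq : 3 ≤ q) (hi1 : 1 ≤ i) (hi2 : i ≤ q - 2)
    (α d : ℝ) (hα : 0 < α) (hd : 0 < d)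
    (hp : (6 : ℝ) ^ q / (α * d) ≤ 1) :
    (1 - (6 : ℝ) ^ q / (α * d)) ^ (α * d / (2 * (5 : ℝ) ^ (q - 2 - i)))
      ≤ 1 / (8 * (q : ℝ) + 1) := by
  obtain ⟨m, rfl⟩ : ∃ m, q = m + 3 := ⟨q - 3, by omega⟩
  set k := m + 3 - 2 - i with hkdef
  have hk : k ≤ m := by omega
  have had : 0 < α * d := mul_pos hα hd
  set p : ℝ := (6 : ℝ) ^ (m+3) / (α * d) with hpdef
  have hp0 : 0 < p := div_pos (by positivity) had
  set t : ℝ := α * d / (2 * (5 : ℝ) ^ k) with htdef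
  have ht0 : 0 < t := div_pos had (by positivity)
  set c : ℝ := (6 : ℝ) ^ (m+3) / (2 * (5 : ℝ) ^ k) with hcdef
  have hpt : p * t = c := by
    rw [hpdef, htdef, hcdef]; field_simp
  -- step 1 : (1-p)^t ≤ exp (-p*t)
  have step1 : (1 - p) ^ t ≤ Real.exp (-(p * t)) := by
    have h1 : (1 - p : ℝ) ≤ Real.exp (-p) := by
      have := Real.add_one_le_exp (-p); linarith
    calc (1 - p) ^ t ≤ (Real.exp (-p)) ^ t :=
          Real.rpow_le_rpow (by linarith) h1 ht0.le
    _ = Real.exp (-p * t) := (Real.exp_mul _ _).symm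
    _ = Real.exp (-(p * t)) := by ring_nf
  -- step 2 : 8q+1 ≤ c
  have hqc : 8 * ((m:ℝ) + 3) + 1 ≤ c := by
    have h5 : (5:ℝ) ^ k ≤ 5 ^ m := pow_le_pow_right₀ (by norm_num) hk
    have hnat : ((16 * m + 50) * 5 ^ m : ℕ) ≤ 216 * 6 ^ m := by
      calc ((16 * m + 50) * 5 ^ m : ℕ) ≤ (16 * m + 100) * 5 ^ m :=
            Nat.mul_le_mul_right _ (by omega)
      _ ≤ 216 * 6 ^ m := aux_pow m
    have hreal : ((16 * m + 50 : ℝ)) * 5 ^ m ≤ 216 * 6 ^ m := by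
      exact_mod_cast hnat
    rw [hcdef, le_div_iff₀ (by positivity)]
    have h6 : (6:ℝ) ^ (m+3) = 216 * 6 ^ m := by ring
    nlinarith [pow_pos (show (0:ℝ) < 5 by norm_num) k, pow_pos (show (0:ℝ) < 5 by norm_num) m]
  -- step 3 : exp (-c) ≤ 1/(8q+1)
  have hq1 : (0:ℝ) < 8 * ((m:ℝ) + 3) + 1 := by positivity
  have step3 : Real.exp (-c) ≤ 1 / (8 * ((m:ℝ) + 3) + 1) := by
    rw [Real.exp_neg]
    rw [inv_eq_one_div]
    apply one_div_le_one_div_of_le hq1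
    calc 8 * ((m:ℝ) + 3) + 1 ≤ c := hqc
    _ ≤ Real.exp c := by have := Real.add_one_le_exp c; linarith
  have := le_trans (hpt ▸ step1) step3
  convert this using 2
  all_goals first | rfl | (push_cast; ring)
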